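/- Proposition 2.6 (cost of compositions): Let p ∈ [1,∞], n ∈ ℕ, d_1, d_2, …, d_{n+1} ∈ ℕ, L_1, L_2, …, L_n ∈ (0,∞); for every i ∈ {1,…,n} let Q_i ⊆ ℝ^{d_i} be a d_i-dimensional hypercube and let f_i ∈ C(Q_i, ℝ^{d_{i+1}}) satisfy f_i(Q_i) ⊆ Q_{i+1} for all i ∈ {1,…,n−1}. Then for all ε ∈ [0,∞): Cost_p(f_n ∘ f_{n−1} ∘ ⋯ ∘ f_1, ∏_{i=1}^n L_i, ε) ≤ 6·∑_{i=2}^n d_i(d_i+1) + 3·∑_{i=1}^n Cost_p(f_i, L_i, ε·n^{−1}·(∏_{j=i+1}^n L_j)^{−1}). -/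

import Mathlib

set_option maxHeartbeats 1000000


open scoped BigOperators ENNReal

noncomputable section

/-- A ReLU deep neural network with `L + 1` affine layers (so depth at least one),
layer dimensions `ℓ 0, ℓ 1, …, ℓ (L + 1)`, weight matrices `W k` and bias vectors `b k`
(values of `ℓ`, `W`, `b` beyond layer index `L` are irrelevant for the realization
and for the number of parameters). -/
structure DNN where
  L : ℕ
  ℓ : ℕ → ℕ
  W : (k : ℕ) → Matrix (Fin (ℓ (k + 1))) (Fin (ℓ k)) ℝ
  b : (k : ℕ) → Fin (ℓ (k + 1)) → ℝ

namespace DNN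

/-- The number of parameters `P(Φ) = ∑_{k=1}^{L} ℓ_k (ℓ_{k-1} + 1)` of a DNN. -/
def params (Φ : DNN) : ℕ :=
  ∑ k ∈ Finset.range (Φ.L + 1), Φ.ℓ (k + 1) * (Φ.ℓ k + 1)

/-- The `k`-th affine layer function `x ↦ W_k x + b_k`. -/
def affine (Φ : DNN) (k : ℕ) (x : Fin (Φ.ℓ k) → ℝ) : Fin (Φ.ℓ (k + 1)) → ℝ :=
  fun i => (∑ j, Φ.W k i j * x j) + Φ.b k i

/-- The value after `k` affine layers, each followed by the ReLU activation. -/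
def hidden (Φ : DNN) : (k : ℕ) → (Fin (Φ.ℓ 0) → ℝ) → (Fin (Φ.ℓ k) → ℝ)
  | 0 => id
  | k + 1 => fun x i => max (affine Φ k (hidden Φ k x) i) 0

/-- The realization `R(Φ)`: all affine layers with ReLU in between (no activation after
the last affine layer). -/
def realize (Φ : DNN) (x : Fin (Φ.ℓ 0) → ℝ) : Fin (Φ.ℓ (Φ.L + 1)) → ℝ :=
  affine Φ Φ.L (hidden Φ Φ.L x)

/-- `Φ.Realizes f` means that the realization of `Φ` is the function `f : ℝ^m → ℝ^n`
(in particular the input and output dimensions of `Φ` are `m` and `n`). -/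
def Realizes (Φ : DNN) {m n : ℕ} (f : (Fin m → ℝ) → (Fin n → ℝ)) : Prop :=
  ∃ (hm : Φ.ℓ 0 = m) (hn : Φ.ℓ (Φ.L + 1) = n),
    ∀ (x : Fin m → ℝ) (i : Fin n),
      f x i = realize Φ (fun j => x (Fin.cast hm j)) (Fin.cast hn.symm i)

end DNN

/-- The `ℓ^p`-norm on `ℝ^k` for `p ∈ [1,∞]`. -/
def lpNorm (p : ℝ≥0∞) {k : ℕ} (x : Fin k → ℝ) : ℝ :=
  if p = ∞ then ⨆ i, |x i| else (∑ i, |x i| ^ p.toReal) ^ (1 / p.toReal)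

/-- The hypercube `[a,b]^d ⊆ ℝ^d`. -/
def cube (d : ℕ) (a b : ℝ) : Set (Fin d → ℝ) :=
  Set.Icc (fun _ => a) (fun _ => b)

/-- `Cost p D f L ε`: the minimal number of parameters of a DNN whose realization
approximates `f` on `D` up to `ε` in the `ℓ^p`-norm and is `L`-Lipschitz on `D`
with respect to the `ℓ^p`-norm; `∞` if no such DNN exists. -/
def Cost (p : ℝ≥0∞) {m n : ℕ} (D : Set (Fin m → ℝ))
    (f : (Fin m → ℝ) → (Fin n → ℝ)) (L ε : ℝ) : ℝ≥0∞ :=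
  sInf { N : ℝ≥0∞ | ∃ Φ : DNN, ∃ g : (Fin m → ℝ) → (Fin n → ℝ),
    Φ.Realizes g ∧ N = (Φ.params : ℝ≥0∞) ∧
    (∀ x ∈ D, lpNorm p (g x - f x) ≤ ε) ∧
    (∀ x ∈ D, ∀ y ∈ D, lpNorm p (g x - g y) ≤ L * lpNorm p (x - y)) }

/-- Given block sizes `d : Fin n → ℕ`, the index in `Fin (∑ j, d j)` of the `l`-th
coordinate of the `i`-th block (blocks are arranged consecutively). -/
def blockIdx {n : ℕ} (d : Fin n → ℕ) (i : Fin n) (l : Fin (d i)) : Fin (∑ j, d j) :=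
  ⟨(∑ j ∈ Finset.univ.filter (fun j => j < i), d j) + l.1, by
    have h1 : l.1 < d i := l.2
    have h2 : (∑ j ∈ Finset.univ.filter (fun j => j < i), d j) + d i ≤ ∑ j, d j := by
      have hsplit := Finset.sum_filter_add_sum_filter_not Finset.univ (fun j => j < i) d
      have h3 : d i ≤ ∑ j ∈ Finset.univ.filter (fun j => ¬ j < i), d j :=
        Finset.single_le_sum (fun _ _ => Nat.zero_le _) (by simp)
      omega
    omega⟩

/-- The class `𝒫_{k,p}([a,b]^d, L)`: parallelizations `f = f_1 □ ⋯ □ f_m` of real-valued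
functions `f_i` of at most `k` variables that are `L`-Lipschitz w.r.t. the `ℓ^p`-norm. -/
def MemPLip (k : ℕ) (p : ℝ≥0∞) (a b L : ℝ) {d m : ℕ}
    (f : (Fin d → ℝ) → (Fin m → ℝ)) : Prop :=
  ∃ (dims : Fin m → ℕ) (hd : ∑ i, dims i = d) (g : ∀ i, (Fin (dims i) → ℝ) → ℝ),
    (∀ i, 0 < dims i) ∧ (∀ i, dims i ≤ k) ∧
    (∀ i, ∀ x ∈ cube (dims i) a b, ∀ y ∈ cube (dims i) a b,
      |g i x - g i y| ≤ L * lpNorm p (x - y)) ∧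
    (∀ x ∈ cube d a b, ∀ i : Fin m,
      f x i = g i (fun l => x (Fin.cast hd (blockIdx dims i l))))

/-- The class `M([a,b]^d)`: parallelizations of maximum functions `m_{d_1} □ ⋯ □ m_{d_m}`. -/
def MemMaxClass (a b : ℝ) {d m : ℕ} (f : (Fin d → ℝ) → (Fin m → ℝ)) : Prop :=
  ∃ (dims : Fin m → ℕ) (hd : ∑ i, dims i = d),
    (∀ i, 0 < dims i) ∧
    (∀ x ∈ cube d a b, ∀ i : Fin m,
      f x i = ⨆ l : Fin (dims i), x (Fin.cast hd (blockIdx dims i l)))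

/-- The class `P([a,b]^d)`: parallelizations of product functions `p_{d_1} □ ⋯ □ p_{d_m}`. -/
def MemProdClass (a b : ℝ) {d m : ℕ} (f : (Fin d → ℝ) → (Fin m → ℝ)) : Prop :=
  ∃ (dims : Fin m → ℕ) (hd : ∑ i, dims i = d),
    (∀ i, 0 < dims i) ∧
    (∀ x ∈ cube d a b, ∀ i : Fin m,
      f x i = ∏ l : Fin (dims i), x (Fin.cast hd (blockIdx dims i l)))

/-- `f` coincides on `[a,b]^d` with the extended maximum function
`𝔪_d(x) = (max{x_1}, max{x_1,x_2}, …, max{x_1,…,x_d})`. -/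
def IsExtMaxOn (a b : ℝ) {d m : ℕ} (f : (Fin d → ℝ) → (Fin m → ℝ)) : Prop :=
  ∃ h : d = m, ∀ x ∈ cube d a b, ∀ i : Fin m,
    f x i = (Finset.Iic (Fin.cast h.symm i)).sup' Finset.nonempty_Iic x

/-- `f` coincides on `[a,b]^d` with the extended product function
`𝔭_d(x) = (x_1, x_1 x_2, …, x_1 ⋯ x_d)`. -/
def IsExtProdOn (a b : ℝ) {d m : ℕ} (f : (Fin d → ℝ) → (Fin m → ℝ)) : Prop :=
  ∃ h : d = m, ∀ x ∈ cube d a b, ∀ i : Fin m,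
    f x i = ∏ j ∈ Finset.Iic (Fin.cast h.symm i), x j

/-- Iterated composition: `compSeq dims f k = f_{k-1} ∘ ⋯ ∘ f_1 ∘ f_0`. -/
def compSeq (dims : ℕ → ℕ) (f : ∀ i : ℕ, (Fin (dims i) → ℝ) → (Fin (dims (i + 1)) → ℝ)) :
    (k : ℕ) → (Fin (dims 0) → ℝ) → (Fin (dims k) → ℝ)
  | 0 => id
  | k + 1 => fun x => f k (compSeq dims f k x)


lemma lpNorm_nonneg (p : ℝ≥0∞) {k : ℕ} (x : Fin k → ℝ) : 0 ≤ lpNorm p x := by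
  unfold lpNorm
  split
  · exact Real.iSup_nonneg fun i => abs_nonneg _
  · exact Real.rpow_nonneg (Finset.sum_nonneg fun i _ => Real.rpow_nonneg (abs_nonneg _) _) _

lemma lpNorm_mono (p : ℝ≥0∞) {k : ℕ} {x y : Fin k → ℝ}
    (h : ∀ i, |x i| ≤ |y i|) : lpNorm p x ≤ lpNorm p y := by
  unfold lpNorm
  split
  · refine Real.iSup_le (fun i => ?_) ?_
    · exact (h i).trans (le_ciSup (f := fun i => |y i|) (Set.Finite.bddAbove (Set.finite_range _)) i)
    · exact Real.iSup_nonneg fun i => abs_nonneg _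
  · refine Real.rpow_le_rpow (Finset.sum_nonneg fun i _ => Real.rpow_nonneg (abs_nonneg _) _)
      (Finset.sum_le_sum fun i _ => ?_) (by positivity)
    exact Real.rpow_le_rpow (abs_nonneg _) (h i) ENNReal.toReal_nonneg

lemma lpNorm_sub_le (p : ℝ≥0∞) (hp : 1 ≤ p) {k : ℕ} (x y z : Fin k → ℝ) :
    lpNorm p (x - z) ≤ lpNorm p (x - y) + lpNorm p (y - z) := by
  unfold lpNorm
  split
  · refine Real.iSup_le (fun i => ?_) ?_
    · have : |x i - z i| ≤ |x i - y i| + |y i - z i| := by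
        have := abs_sub_le (x i) (y i) (z i)
        simpa using this
      refine this.trans (add_le_add ?_ ?_)
      · exact le_ciSup (f := fun i => |(x - y) i|) (Set.Finite.bddAbove (Set.finite_range _)) i
      · exact le_ciSup (f := fun i => |(y - z) i|) (Set.Finite.bddAbove (Set.finite_range _)) i
    · have : (0:ℝ) ≤ ⨆ i, |(x - y) i| := Real.iSup_nonneg fun i => abs_nonneg _
      have h2 : (0:ℝ) ≤ ⨆ i, |(y - z) i| := Real.iSup_nonneg fun i => abs_nonneg _
      simpa using add_nonneg this h2
  · have hpt : 1 ≤ p.toReal := by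
      rename_i hne
      have := ENNReal.toReal_mono hne hp
      simpa using this
    have := Real.Lp_add_le Finset.univ (fun i => x i - y i) (fun i => y i - z i) hpt
    have he : ∀ i : Fin k, (x - z) i = (x i - y i) + (y i - z i) := by
      intro i; simp [sub_eq_add_neg]
    calc (∑ i, |(x - z) i| ^ p.toReal) ^ (1 / p.toReal)
        = (∑ i, |(fun i => x i - y i) i + (fun i => y i - z i) i| ^ p.toReal) ^ (1 / p.toReal) := by
          congr 1; refine Finset.sum_congr rfl fun i _ => by rw [he i]
      _ ≤ _ := this.trans (by apply add_le_add <;> simp [Pi.sub_apply])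

def rclip (a b y : ℝ) : ℝ := min (max y a) b

lemma rclip_eq {a b : ℝ} (hab : a ≤ b) (y : ℝ) :
    rclip a b y = a + max (y - a) 0 - max (y - b) 0 := by
  unfold rclip
  rcases le_total y a with h | h
  · rw [max_eq_right h, min_eq_left hab, max_eq_right (by linarith), max_eq_right (by linarith)]
    ring
  · rw [max_eq_left h, max_eq_left (by linarith)]
    rcases le_total y b with h' | h'
    · rw [min_eq_left h', max_eq_right (by linarith)]; ring
    · rw [min_eq_right h', max_eq_left (by linarith)]; ring

lemma rclip_lip (a b u v : ℝ) : |rclip a b u - rclip a b v| ≤ |u - v| := by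
  unfold rclip
  calc |min (max u a) b - min (max v a) b| ≤ |max u a - max v a| := by
        have := abs_min_sub_min_le_max (max u a) b (max v a) b
        simpa using this
    _ ≤ |u - v| := abs_max_sub_max_le_abs _ _ _

lemma rclip_le {a b : ℝ} (y : ℝ) : rclip a b y ≤ b := min_le_right _ _

lemma rclip_ge {a b : ℝ} (hab : a ≤ b) (y : ℝ) : a ≤ rclip a b y :=
  le_min (le_max_right _ _) hab

lemma rclip_of_mem {a b y : ℝ} (h1 : a ≤ y) (h2 : y ≤ b) : rclip a b y = y := by
  unfold rclip; rw [max_eq_left h1, min_eq_left h2]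


lemma mem_cube {d : ℕ} {a b : ℝ} {x : Fin d → ℝ} :
    x ∈ cube d a b ↔ ∀ i, a ≤ x i ∧ x i ≤ b := by
  constructor
  · rintro ⟨h1, h2⟩ i; exact ⟨h1 i, h2 i⟩
  · intro h; exact ⟨fun i => (h i).1, fun i => (h i).2⟩
namespace DNN

variable (Φ1 Φ2 : DNN) (d : ℕ)

/-- layer widths of the composition -/
def cℓ : ℕ → ℕ := fun k =>
  if k ≤ Φ1.L then Φ1.ℓ k
  else if k = Φ1.L + 1 then 2 * d
  else if k = Φ1.L + 2 then d
  else Φ2.ℓ (k - (Φ1.L + 2))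

variable {Φ1 Φ2 d}

lemma cℓ_le {k : ℕ} (h : k ≤ Φ1.L) : cℓ Φ1 Φ2 d k = Φ1.ℓ k := by simp [cℓ, h]

lemma cℓ_j1 : cℓ Φ1 Φ2 d (Φ1.L + 1) = 2 * d := by simp [cℓ]

lemma cℓ_j2 : cℓ Φ1 Φ2 d (Φ1.L + 2) = d := by simp [cℓ]

lemma cℓ_hi (hd2 : Φ2.ℓ 0 = d) {k : ℕ} (h : Φ1.L + 2 ≤ k) :
    cℓ Φ1 Φ2 d k = Φ2.ℓ (k - (Φ1.L + 2)) := by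
  rcases eq_or_lt_of_le h with h' | h'
  · rw [← h']
    simpa [cℓ] using hd2.symm
  · have h1 : ¬ k ≤ Φ1.L := by omega
    have h2 : ¬ k = Φ1.L + 1 := by omega
    have h3 : ¬ k = Φ1.L + 2 := by omega
    simp [cℓ, h1, h2, h3]

variable (Φ1 Φ2 d) in
/-- weights of the composition -/
def cW (hd1 : Φ1.ℓ (Φ1.L + 1) = d) (hd2 : Φ2.ℓ 0 = d) :
    (k : ℕ) → Matrix (Fin (cℓ Φ1 Φ2 d (k + 1))) (Fin (cℓ Φ1 Φ2 d k)) ℝ := fun k i j =>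
  if hk : k < Φ1.L then
    Φ1.W k ⟨i.1, by have h := i.2; have he : cℓ Φ1 Φ2 d (k+1) = Φ1.ℓ (k+1) := cℓ_le (by omega); omega⟩
           ⟨j.1, by have h := j.2; have he : cℓ Φ1 Φ2 d k = Φ1.ℓ k := cℓ_le (by omega); omega⟩
  else if hk1 : k = Φ1.L then
    Φ1.W Φ1.L ⟨if i.1 < d then i.1 else i.1 - d, by
        have h2 := i.2
        have he : cℓ Φ1 Φ2 d (k+1) = 2*d := by rw [hk1]; exact cℓ_j1
        split <;> omega⟩
      ⟨j.1, by
        have h := j.2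
        have he : cℓ Φ1 Φ2 d k = Φ1.ℓ Φ1.L := by rw [hk1]; exact cℓ_le (le_refl _)
        omega⟩
  else if hk2 : k = Φ1.L + 1 then
    (if j.1 = i.1 then 1 else if j.1 = i.1 + d then (-1 : ℝ) else 0)
  else
    Φ2.W (k - (Φ1.L + 2))
      ⟨i.1, by
        have h := i.2
        have he : cℓ Φ1 Φ2 d (k+1) = Φ2.ℓ (k + 1 - (Φ1.L + 2)) := cℓ_hi hd2 (by omega)
        have he2 : k + 1 - (Φ1.L + 2) = k - (Φ1.L + 2) + 1 := by omega
        rw [he2] at he; omega⟩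
      ⟨j.1, by
        have h := j.2
        have he : cℓ Φ1 Φ2 d k = Φ2.ℓ (k - (Φ1.L + 2)) := cℓ_hi hd2 (by omega)
        omega⟩

variable (Φ1 Φ2 d) in
/-- biases of the composition -/
def cb (a bb : ℝ) (hd1 : Φ1.ℓ (Φ1.L + 1) = d) (hd2 : Φ2.ℓ 0 = d) :
    (k : ℕ) → Fin (cℓ Φ1 Φ2 d (k + 1)) → ℝ := fun k i =>
  if hk : k < Φ1.L then
    Φ1.b k ⟨i.1, by have h := i.2; have he : cℓ Φ1 Φ2 d (k+1) = Φ1.ℓ (k+1) := cℓ_le (by omega); omega⟩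
  else if hk1 : k = Φ1.L then
    Φ1.b Φ1.L ⟨if i.1 < d then i.1 else i.1 - d, by
        have h2 := i.2
        have he : cℓ Φ1 Φ2 d (k+1) = 2*d := by rw [hk1]; exact cℓ_j1
        split <;> omega⟩
      - (if i.1 < d then a else bb)
  else if hk2 : k = Φ1.L + 1 then 0
  else if hk3 : k = Φ1.L + 2 then
    Φ2.b 0 ⟨i.1, by
        have h := i.2
        have he : cℓ Φ1 Φ2 d (k+1) = Φ2.ℓ (k + 1 - (Φ1.L + 2)) := cℓ_hi hd2 (by omega)
        have he2 : k + 1 - (Φ1.L + 2) = 0 + 1 := by omega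
        rw [he2] at he; omega⟩
      + a * ∑ j, Φ2.W 0 ⟨i.1, by
        have h := i.2
        have he : cℓ Φ1 Φ2 d (k+1) = Φ2.ℓ (k + 1 - (Φ1.L + 2)) := cℓ_hi hd2 (by omega)
        have he2 : k + 1 - (Φ1.L + 2) = 0 + 1 := by omega
        rw [he2] at he; omega⟩ j
  else
    Φ2.b (k - (Φ1.L + 2)) ⟨i.1, by
        have h := i.2
        have he : cℓ Φ1 Φ2 d (k+1) = Φ2.ℓ (k + 1 - (Φ1.L + 2)) := cℓ_hi hd2 (by omega)
        have he2 : k + 1 - (Φ1.L + 2) = k - (Φ1.L + 2) + 1 := by omega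
        rw [he2] at he; omega⟩

variable (Φ1 Φ2 d) in
def comp (a bb : ℝ) (hd1 : Φ1.ℓ (Φ1.L + 1) = d) (hd2 : Φ2.ℓ 0 = d) : DNN :=
  ⟨Φ1.L + Φ2.L + 2, cℓ Φ1 Φ2 d, cW Φ1 Φ2 d hd1 hd2, cb Φ1 Φ2 d a bb hd1 hd2⟩

end DNN

namespace DNN

lemma W_congr (Φ : DNN) {k k' : ℕ} (h : k = k') (i : Fin (Φ.ℓ (k+1))) (j : Fin (Φ.ℓ k))
    (i' : Fin (Φ.ℓ (k'+1))) (j' : Fin (Φ.ℓ k')) (hi : i.1 = i'.1) (hj : j.1 = j'.1) :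
    Φ.W k i j = Φ.W k' i' j' := by
  subst h; rw [Fin.ext hi, Fin.ext hj]

lemma affine_congr (Φ : DNN) {k k' : ℕ} (h : k = k') {v : Fin (Φ.ℓ k) → ℝ}
    {v' : Fin (Φ.ℓ k') → ℝ}
    (hv : ∀ (j : Fin (Φ.ℓ k)) (j' : Fin (Φ.ℓ k')), j.1 = j'.1 → v j = v' j')
    {i : Fin (Φ.ℓ (k+1))} {i' : Fin (Φ.ℓ (k'+1))} (hi : i.1 = i'.1) :
    Φ.affine k v i = Φ.affine k' v' i' := by
  subst h
  have hvv : v = v' := funext fun j => hv j j rfl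
  subst hvv; rw [Fin.ext hi]

lemma hidden_congr (Φ : DNN) {k k' : ℕ} (h : k = k') (x : Fin (Φ.ℓ 0) → ℝ)
    {i : Fin (Φ.ℓ k)} {i' : Fin (Φ.ℓ k')} (hi : i.1 = i'.1) :
    Φ.hidden k x i = Φ.hidden k' x i' := by
  subst h; rw [Fin.ext hi]

lemma lastP_le_params (Φ : DNN) : Φ.ℓ (Φ.L + 1) * (Φ.ℓ Φ.L + 1) ≤ Φ.params := by
  have := Finset.single_le_sum (f := fun k => Φ.ℓ (k+1) * (Φ.ℓ k + 1))
    (fun k _ => Nat.zero_le _) (Finset.self_mem_range_succ Φ.L)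
  simpa [params] using this

lemma b_congr (Φ : DNN) {k k' : ℕ} (h : k = k') (i : Fin (Φ.ℓ (k+1)))
    (i' : Fin (Φ.ℓ (k'+1))) (hi : i.1 = i'.1) : Φ.b k i = Φ.b k' i' := by
  subst h; rw [Fin.ext hi]

lemma hidden_succ (Φ : DNN) (k : ℕ) (x : Fin (Φ.ℓ 0) → ℝ) (i : Fin (Φ.ℓ (k+1))) :
    Φ.hidden (k+1) x i = max (Φ.affine k (Φ.hidden k x) i) 0 := rfl

lemma hidden_zero (Φ : DNN) (x : Fin (Φ.ℓ 0) → ℝ) : Φ.hidden 0 x = x := rfl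

lemma hidden_add_succ (Φ : DNN) (ab k : ℕ) (x : Fin (Φ.ℓ 0) → ℝ)
    (i : Fin (Φ.ℓ (ab + (k + 1)))) :
    Φ.hidden (ab + (k + 1)) x i = max (Φ.affine (ab + k) (Φ.hidden (ab + k) x) i) 0 := rfl

variable {Φ1 Φ2 : DNN} {d : ℕ} {a bb : ℝ} (hd1 : Φ1.ℓ (Φ1.L + 1) = d) (hd2 : Φ2.ℓ 0 = d)

private lemma sum_cast {n n' : ℕ} (h : n' = n) (F : Fin n' → ℝ) (G : Fin n → ℝ)
    (hFG : ∀ j : Fin n', F j = G (Fin.cast h j)) : ∑ j, F j = ∑ j, G j :=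
  Fintype.sum_equiv (finCongr h) F G hFG

lemma comp_hidden_lower (x : Fin (cℓ Φ1 Φ2 d 0) → ℝ) :
    ∀ k, ∀ (hk : k ≤ Φ1.L) (hc : cℓ Φ1 Φ2 d k = Φ1.ℓ k)
      (hc0 : cℓ Φ1 Φ2 d 0 = Φ1.ℓ 0) (i : Fin (Φ1.ℓ k)),
      (comp Φ1 Φ2 d a bb hd1 hd2).hidden k x (Fin.cast hc.symm i) =
        Φ1.hidden k (fun j => x (Fin.cast hc0.symm j)) i := by
  intro k
  induction k with
  | zero => intro hk hc hc0 i; rfl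
  | succ k IH =>
    intro hk hc hc0 i
    have hklt : k < Φ1.L := hk
    have hkle : k ≤ Φ1.L := by omega
    have hck : cℓ Φ1 Φ2 d k = Φ1.ℓ k := cℓ_le hkle
    simp only [hidden]
    congr 1
    simp only [affine]
    congr 1
    · refine sum_cast hck _ _ (fun j => ?_)
      rw [← IH hkle hck hc0 (Fin.cast hck j)]
      congr 1
      show cW Φ1 Φ2 d hd1 hd2 k (Fin.cast hc.symm i) j = _
      simp only [cW]
      rw [dif_pos hklt]
      exact W_congr Φ1 rfl _ _ _ _ rfl rfl
    · show cb Φ1 Φ2 d a bb hd1 hd2 k (Fin.cast hc.symm i) = _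
      simp only [cb]
      rw [dif_pos hklt]
      exact congrArg (Φ1.b k) (Fin.ext rfl)

lemma comp_hidden_j1 (x : Fin (cℓ Φ1 Φ2 d 0) → ℝ)
    (hc : cℓ Φ1 Φ2 d (Φ1.L + 1) = 2 * d) (hc0 : cℓ Φ1 Φ2 d 0 = Φ1.ℓ 0)
    (i : Fin (2 * d)) :
    (comp Φ1 Φ2 d a bb hd1 hd2).hidden (Φ1.L + 1) x (Fin.cast hc.symm i) =
      max ((Φ1.realize (fun j => x (Fin.cast hc0.symm j))
          (Fin.cast hd1.symm ⟨if i.1 < d then i.1 else i.1 - d,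
            by have := i.2; split <;> omega⟩))
        - (if i.1 < d then a else bb)) 0 := by
  have hck : cℓ Φ1 Φ2 d Φ1.L = Φ1.ℓ Φ1.L := cℓ_le le_rfl
  simp only [hidden]
  congr 1
  simp only [affine, realize]
  have hsum : ∑ j : Fin ((comp Φ1 Φ2 d a bb hd1 hd2).ℓ Φ1.L),
        (comp Φ1 Φ2 d a bb hd1 hd2).W Φ1.L (Fin.cast hc.symm i) j *
          (comp Φ1 Φ2 d a bb hd1 hd2).hidden Φ1.L x j
      = ∑ j : Fin (Φ1.ℓ Φ1.L),
          Φ1.W Φ1.L (Fin.cast hd1.symm ⟨if i.1 < d then i.1 else i.1 - d,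
              by have := i.2; split <;> omega⟩) j *
            Φ1.hidden Φ1.L (fun j => x (Fin.cast hc0.symm j)) j := by
    refine sum_cast hck _ _ (fun j => ?_)
    rw [← comp_hidden_lower hd1 hd2 x Φ1.L le_rfl hck hc0 (Fin.cast hck j)]
    refine congrArg₂ (· * ·) ?_ ?_
    · show cW Φ1 Φ2 d hd1 hd2 Φ1.L (Fin.cast hc.symm i) j = _
      simp only [cW]
      rw [dif_neg (lt_irrefl Φ1.L), dif_pos trivial]
      exact W_congr Φ1 rfl _ _ _ _ rfl rfl
    · exact congrArg ((comp Φ1 Φ2 d a bb hd1 hd2).hidden Φ1.L x) (Fin.ext rfl)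
  have hb : (comp Φ1 Φ2 d a bb hd1 hd2).b Φ1.L (Fin.cast hc.symm i)
      = Φ1.b Φ1.L (Fin.cast hd1.symm ⟨if i.1 < d then i.1 else i.1 - d,
            by have := i.2; split <;> omega⟩) - (if i.1 < d then a else bb) := by
    show cb Φ1 Φ2 d a bb hd1 hd2 Φ1.L (Fin.cast hc.symm i) = _
    simp only [cb]
    rw [dif_neg (lt_irrefl Φ1.L), dif_pos trivial]
    refine congrArg₂ (· - ·) (congrArg (Φ1.b Φ1.L) (Fin.ext rfl)) rfl
  rw [hsum, hb]
  ring


lemma comp_hidden_j2 (hab : a ≤ bb) (x : Fin (cℓ Φ1 Φ2 d 0) → ℝ)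
    (hc : cℓ Φ1 Φ2 d (Φ1.L + 2) = d) (hc0 : cℓ Φ1 Φ2 d 0 = Φ1.ℓ 0) (i : Fin d) :
    (comp Φ1 Φ2 d a bb hd1 hd2).hidden (Φ1.L + 2) x (Fin.cast hc.symm i) =
      rclip a bb (Φ1.realize (fun j => x (Fin.cast hc0.symm j)) (Fin.cast hd1.symm i)) - a := by
  have hc1 : cℓ Φ1 Φ2 d (Φ1.L + 1) = 2 * d := cℓ_j1
  have hid : 0 < d := i.pos
  have hi2 := i.2
  set Y := Φ1.realize (fun j => x (Fin.cast hc0.symm j)) (Fin.cast hd1.symm i) with hY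
  set H : Fin (2*d) → ℝ :=
    fun j' => (comp Φ1 Φ2 d a bb hd1 hd2).hidden (Φ1.L + 1) x (Fin.cast hc1.symm j') with hH
  set A : Fin (2*d) := ⟨i.1, by omega⟩ with hA
  set B : Fin (2*d) := ⟨i.1 + d, by omega⟩ with hB
  have hAB : A ≠ B := by
    intro he
    have := congrArg Fin.val he
    simp [hA, hB] at this
    omega
  have hHA : H A = max (Y - a) 0 := by
    show (comp Φ1 Φ2 d a bb hd1 hd2).hidden (Φ1.L + 1) x (Fin.cast hc1.symm A) = _
    rw [comp_hidden_j1 hd1 hd2 x hc1 hc0 A]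
    have hlt : (A : ℕ) < d := hi2
    congr 1
    congr 1
    · refine congrArg _ (congrArg _ (Fin.ext ?_))
      show (if (A : ℕ) < d then (A : ℕ) else (A : ℕ) - d) = (i : ℕ)
      rw [if_pos hlt]
    · exact if_pos hlt
  have hHB : H B = max (Y - bb) 0 := by
    show (comp Φ1 Φ2 d a bb hd1 hd2).hidden (Φ1.L + 1) x (Fin.cast hc1.symm B) = _
    rw [comp_hidden_j1 hd1 hd2 x hc1 hc0 B]
    have hlt : ¬ (B : ℕ) < d := by show ¬ ((i : ℕ) + d) < d; omega
    congr 1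
    congr 1
    · refine congrArg _ (congrArg _ (Fin.ext ?_))
      show (if (B : ℕ) < d then (B : ℕ) else (B : ℕ) - d) = (i : ℕ)
      rw [if_neg hlt]
      show (i : ℕ) + d - d = (i : ℕ)
      omega
    · exact if_neg hlt
  have hb0 : (comp Φ1 Φ2 d a bb hd1 hd2).b (Φ1.L + 1) (Fin.cast hc.symm i) = 0 := by
    show cb Φ1 Φ2 d a bb hd1 hd2 (Φ1.L + 1) (Fin.cast hc.symm i) = 0
    simp only [cb]
    rw [dif_neg (show ¬ Φ1.L + 1 < Φ1.L by omega), dif_neg (show ¬ Φ1.L + 1 = Φ1.L by omega),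
      dif_pos trivial]
  have hW : ∀ j : Fin (cℓ Φ1 Φ2 d (Φ1.L + 1)),
      (comp Φ1 Φ2 d a bb hd1 hd2).W (Φ1.L + 1) (Fin.cast hc.symm i) j =
        (if j.1 = i.1 then (1:ℝ) else if j.1 = i.1 + d then -1 else 0) := by
    intro j
    show cW Φ1 Φ2 d hd1 hd2 (Φ1.L + 1) (Fin.cast hc.symm i) j = _
    simp only [cW]
    rw [dif_neg (show ¬ Φ1.L + 1 < Φ1.L by omega), dif_neg (show ¬ Φ1.L + 1 = Φ1.L by omega),
      dif_pos trivial]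
    simp
  have hsum : ∑ j : Fin ((comp Φ1 Φ2 d a bb hd1 hd2).ℓ (Φ1.L + 1)),
      (comp Φ1 Φ2 d a bb hd1 hd2).W (Φ1.L + 1) (Fin.cast hc.symm i) j *
        (comp Φ1 Φ2 d a bb hd1 hd2).hidden (Φ1.L + 1) x j
      = H A + - H B := by
    calc ∑ j : Fin ((comp Φ1 Φ2 d a bb hd1 hd2).ℓ (Φ1.L + 1)),
        (comp Φ1 Φ2 d a bb hd1 hd2).W (Φ1.L + 1) (Fin.cast hc.symm i) j *
          (comp Φ1 Φ2 d a bb hd1 hd2).hidden (Φ1.L + 1) x j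
        = ∑ j' : Fin (2*d),
            ((if j'.1 = i.1 then (1:ℝ) else if j'.1 = i.1 + d then -1 else 0) * H j') := by
          refine sum_cast hc1 _ _ (fun j => ?_)
          rw [hW j]
          refine congrArg₂ (· * ·) (by simp) (congrArg _ (Fin.ext rfl))
      _ = ∑ j' : Fin (2*d), ((if j' = A then H j' else 0) + (if j' = B then - H j' else 0)) := by
          refine Finset.sum_congr rfl (fun j' _ => ?_)
          by_cases h1 : j'.1 = i.1
          · have hA' : j' = A := Fin.ext h1
            rw [if_pos h1, if_pos hA', if_neg (show ¬ j' = B from by rw [hA']; exact hAB)]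
            ring
          · rw [if_neg h1]
            by_cases h2 : j'.1 = i.1 + d
            · have hB' : j' = B := Fin.ext h2
              rw [if_pos h2, if_neg (show ¬ j' = A from fun he => h1 (by rw [he])),
                if_pos hB']
              ring
            · rw [if_neg h2, if_neg (show ¬ j' = A from fun he => h1 (by rw [he])),
                if_neg (show ¬ j' = B from fun he => h2 (by rw [he]))]
              ring
      _ = H A + - H B := by
          rw [Finset.sum_add_distrib, Finset.sum_ite_eq' Finset.univ A H,
            Finset.sum_ite_eq' Finset.univ B (fun j' => - H j')]
          simp
  show max ((comp Φ1 Φ2 d a bb hd1 hd2).affine (Φ1.L + 1)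
    ((comp Φ1 Φ2 d a bb hd1 hd2).hidden (Φ1.L + 1) x) (Fin.cast hc.symm i)) 0 = _
  simp only [affine]
  rw [hsum, hb0, add_zero, hHA, hHB, ← sub_eq_add_neg]
  have h5 : max (Y - bb) 0 ≤ max (Y - a) 0 := max_le_max (by linarith) le_rfl
  rw [max_eq_left (by linarith : (0:ℝ) ≤ max (Y - a) 0 - max (Y - bb) 0), rclip_eq hab]
  ring


lemma comp_affine_upper (hab : a ≤ bb) (x : Fin (cℓ Φ1 Φ2 d 0) → ℝ)
    (hc0 : cℓ Φ1 Φ2 d 0 = Φ1.ℓ 0) :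
    ∀ k, ∀ (hc : cℓ Φ1 Φ2 d (Φ1.L + 2 + k + 1) = Φ2.ℓ (k + 1)) (i : Fin (Φ2.ℓ (k + 1))),
      (comp Φ1 Φ2 d a bb hd1 hd2).affine (Φ1.L + 2 + k)
          ((comp Φ1 Φ2 d a bb hd1 hd2).hidden (Φ1.L + 2 + k) x) (Fin.cast hc.symm i)
        = Φ2.affine k (Φ2.hidden k (fun j => rclip a bb
            (Φ1.realize (fun j' => x (Fin.cast hc0.symm j'))
              (Fin.cast hd1.symm (Fin.cast hd2 j))))) i := by
  intro k
  induction k with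
  | zero =>
    intro hc i
    have hcz : cℓ Φ1 Φ2 d (Φ1.L + 2 + 0) = Φ2.ℓ 0 := by
      rw [cℓ_hi hd2 (by omega)]; congr 1; omega
    have hcz2 : cℓ Φ1 Φ2 d (Φ1.L + 2 + 0) = d := hcz.trans hd2
    have hW0 : ∀ j : Fin (cℓ Φ1 Φ2 d (Φ1.L + 2 + 0)),
        (comp Φ1 Φ2 d a bb hd1 hd2).W (Φ1.L + 2 + 0) (Fin.cast hc.symm i) j
          = Φ2.W 0 i (Fin.cast hcz j) := by
      intro j
      show cW Φ1 Φ2 d hd1 hd2 (Φ1.L + 2 + 0) (Fin.cast hc.symm i) j = _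
      simp only [cW]
      rw [dif_neg (show ¬ Φ1.L + 2 + 0 < Φ1.L by omega),
        dif_neg (show ¬ Φ1.L + 2 + 0 = Φ1.L by omega),
        dif_neg (show ¬ Φ1.L + 2 + 0 = Φ1.L + 1 by omega)]
      exact W_congr Φ2 (by omega) _ _ _ _ rfl rfl
    have hHid : ∀ j : Fin (cℓ Φ1 Φ2 d (Φ1.L + 2 + 0)),
        (comp Φ1 Φ2 d a bb hd1 hd2).hidden (Φ1.L + 2 + 0) x j
          = rclip a bb (Φ1.realize (fun j' => x (Fin.cast hc0.symm j'))
              (Fin.cast hd1.symm (Fin.cast hd2 (Fin.cast hcz j)))) - a := by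
      intro j
      exact comp_hidden_j2 hd1 hd2 hab x cℓ_j2 hc0 (Fin.cast hcz2 j)
    have hb' : (comp Φ1 Φ2 d a bb hd1 hd2).b (Φ1.L + 2 + 0) (Fin.cast hc.symm i)
        = Φ2.b 0 i + a * ∑ j, Φ2.W 0 i j := by
      show cb Φ1 Φ2 d a bb hd1 hd2 (Φ1.L + 2 + 0) (Fin.cast hc.symm i) = _
      simp only [cb]
      rw [dif_neg (show ¬ Φ1.L + 2 + 0 < Φ1.L by omega),
        dif_neg (show ¬ Φ1.L + 2 + 0 = Φ1.L by omega),
        dif_neg (show ¬ Φ1.L + 2 + 0 = Φ1.L + 1 by omega),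
        dif_pos trivial]
      exact congrArg₂ (· + ·) (congrArg (Φ2.b 0) (Fin.ext rfl))
        (congrArg (fun t => a * ∑ j, Φ2.W 0 t j) (Fin.ext rfl))
    simp only [affine, hidden_zero]
    have hsum : ∑ j : Fin ((comp Φ1 Φ2 d a bb hd1 hd2).ℓ (Φ1.L + 2 + 0)),
        (comp Φ1 Φ2 d a bb hd1 hd2).W (Φ1.L + 2 + 0) (Fin.cast hc.symm i) j *
          (comp Φ1 Φ2 d a bb hd1 hd2).hidden (Φ1.L + 2 + 0) x j
        = ∑ j' : Fin (Φ2.ℓ 0), Φ2.W 0 i j' *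
            ((rclip a bb (Φ1.realize (fun j'' => x (Fin.cast hc0.symm j''))
              (Fin.cast hd1.symm (Fin.cast hd2 j')))) - a) := by
      refine sum_cast hcz _ _ (fun j => ?_)
      rw [hW0 j, hHid j]
    rw [hsum, hb']
    have expand : ∑ j' : Fin (Φ2.ℓ 0), Φ2.W 0 i j' *
            ((rclip a bb (Φ1.realize (fun j'' => x (Fin.cast hc0.symm j''))
              (Fin.cast hd1.symm (Fin.cast hd2 j')))) - a)
        = (∑ j' : Fin (Φ2.ℓ 0), Φ2.W 0 i j' *
            rclip a bb (Φ1.realize (fun j'' => x (Fin.cast hc0.symm j''))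
              (Fin.cast hd1.symm (Fin.cast hd2 j')))) - a * ∑ j', Φ2.W 0 i j' := by
      rw [Finset.mul_sum, ← Finset.sum_sub_distrib]
      exact Finset.sum_congr rfl fun j' _ => by ring
    rw [expand]
    ring
  | succ k IH =>
    intro hc i
    have hck1 : cℓ Φ1 Φ2 d (Φ1.L + 2 + (k + 1)) = Φ2.ℓ (k + 1) := by
      rw [cℓ_hi hd2 (by omega)]; congr 1; omega
    have hW' : ∀ j : Fin (cℓ Φ1 Φ2 d (Φ1.L + 2 + (k + 1))),
        (comp Φ1 Φ2 d a bb hd1 hd2).W (Φ1.L + 2 + (k + 1)) (Fin.cast hc.symm i) j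
          = Φ2.W (k + 1) i (Fin.cast hck1 j) := by
      intro j
      show cW Φ1 Φ2 d hd1 hd2 (Φ1.L + 2 + (k + 1)) (Fin.cast hc.symm i) j = _
      simp only [cW]
      rw [dif_neg (show ¬ Φ1.L + 2 + (k + 1) < Φ1.L by omega),
        dif_neg (show ¬ Φ1.L + 2 + (k + 1) = Φ1.L by omega),
        dif_neg (show ¬ Φ1.L + 2 + (k + 1) = Φ1.L + 1 by omega)]
      exact W_congr Φ2 (by omega) _ _ _ _ rfl rfl
    have hb' : (comp Φ1 Φ2 d a bb hd1 hd2).b (Φ1.L + 2 + (k + 1)) (Fin.cast hc.symm i)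
        = Φ2.b (k + 1) i := by
      show cb Φ1 Φ2 d a bb hd1 hd2 (Φ1.L + 2 + (k + 1)) (Fin.cast hc.symm i) = _
      simp only [cb]
      rw [dif_neg (show ¬ Φ1.L + 2 + (k + 1) < Φ1.L by omega),
        dif_neg (show ¬ Φ1.L + 2 + (k + 1) = Φ1.L by omega),
        dif_neg (show ¬ Φ1.L + 2 + (k + 1) = Φ1.L + 1 by omega),
        dif_neg (show ¬ Φ1.L + 2 + (k + 1) = Φ1.L + 2 by omega)]
      exact b_congr Φ2 (by omega) _ _ rfl
    have hhid : ∀ j : Fin (cℓ Φ1 Φ2 d (Φ1.L + 2 + (k + 1))),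
        (comp Φ1 Φ2 d a bb hd1 hd2).hidden (Φ1.L + 2 + (k + 1)) x j
          = Φ2.hidden (k + 1) (fun j' => rclip a bb
              (Φ1.realize (fun j'' => x (Fin.cast hc0.symm j''))
                (Fin.cast hd1.symm (Fin.cast hd2 j')))) (Fin.cast hck1 j) := by
      intro j
      show max ((comp Φ1 Φ2 d a bb hd1 hd2).affine (Φ1.L + 2 + k)
          ((comp Φ1 Φ2 d a bb hd1 hd2).hidden (Φ1.L + 2 + k) x) j) 0 =
        max (Φ2.affine k (Φ2.hidden k (fun j' => rclip a bb
          (Φ1.realize (fun j'' => x (Fin.cast hc0.symm j''))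
            (Fin.cast hd1.symm (Fin.cast hd2 j'))))) (Fin.cast hck1 j)) 0
      congr 1
      exact IH (by rw [cℓ_hi hd2 (by omega)]; congr 1; omega) (Fin.cast hck1 j)
    simp only [affine]
    refine congrArg₂ (· + ·) ?_ hb'
    refine sum_cast hck1 _ _ (fun j => ?_)
    rw [hW' j, hhid j]

lemma comp_realizes {m r : ℕ} (hab : a ≤ bb)
    (g1 : (Fin m → ℝ) → Fin d → ℝ) (g2 : (Fin d → ℝ) → Fin r → ℝ)
    (h1 : Φ1.Realizes g1) (h2 : Φ2.Realizes g2) :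
    (comp Φ1 Φ2 d a bb hd1 hd2).Realizes (fun x i => g2 (fun j => rclip a bb (g1 x j)) i) := by
  obtain ⟨hm1, hn1, e1⟩ := h1
  obtain ⟨hm2, hn2, e2⟩ := h2
  have hc0 : cℓ Φ1 Φ2 d 0 = Φ1.ℓ 0 := cℓ_le (Nat.zero_le _)
  have hm : (comp Φ1 Φ2 d a bb hd1 hd2).ℓ 0 = m := hc0.trans hm1
  have hn : (comp Φ1 Φ2 d a bb hd1 hd2).ℓ ((comp Φ1 Φ2 d a bb hd1 hd2).L + 1) = r := by
    show cℓ Φ1 Φ2 d (Φ1.L + Φ2.L + 2 + 1) = r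
    rw [cℓ_hi hd2 (by omega), show Φ1.L + Φ2.L + 2 + 1 - (Φ1.L + 2) = Φ2.L + 1 from by omega]
    exact hn2
  refine ⟨hm, hn, fun x i => ?_⟩
  have hz : (fun j => rclip a bb (g1 x (Fin.cast hm2 j)))
      = (fun j : Fin (Φ2.ℓ 0) => rclip a bb
          (Φ1.realize (fun j' => (fun j'' => x (Fin.cast hm j'')) (Fin.cast hc0.symm j'))
            (Fin.cast hd1.symm (Fin.cast hd2 j)))) := by
    funext j
    rw [e1]
    rfl
  have hcΦ : cℓ Φ1 Φ2 d (Φ1.L + 2 + Φ2.L + 1) = Φ2.ℓ (Φ2.L + 1) := by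
    rw [cℓ_hi hd2 (by omega)]; congr 1; omega
  calc g2 (fun j => rclip a bb (g1 x j)) i
      = Φ2.realize (fun j => rclip a bb (g1 x (Fin.cast hm2 j))) (Fin.cast hn2.symm i) :=
        e2 _ i
    _ = Φ2.affine Φ2.L (Φ2.hidden Φ2.L
          (fun j : Fin (Φ2.ℓ 0) => rclip a bb
            (Φ1.realize (fun j' => (fun j'' => x (Fin.cast hm j'')) (Fin.cast hc0.symm j'))
              (Fin.cast hd1.symm (Fin.cast hd2 j))))) (Fin.cast hn2.symm i) := by
        rw [hz]; rfl
    _ = (comp Φ1 Φ2 d a bb hd1 hd2).affine (Φ1.L + 2 + Φ2.L)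
          ((comp Φ1 Φ2 d a bb hd1 hd2).hidden (Φ1.L + 2 + Φ2.L) (fun j => x (Fin.cast hm j)))
          (Fin.cast hcΦ.symm (Fin.cast hn2.symm i)) :=
        (comp_affine_upper hd1 hd2 hab (fun j => x (Fin.cast hm j)) hc0 Φ2.L hcΦ
          (Fin.cast hn2.symm i)).symm
    _ = (comp Φ1 Φ2 d a bb hd1 hd2).realize (fun j => x (Fin.cast hm j)) (Fin.cast hn.symm i) :=
        affine_congr _ (by show Φ1.L + 2 + Φ2.L = Φ1.L + Φ2.L + 2; omega)
          (fun j j' hjj => hidden_congr _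
            (by show Φ1.L + 2 + Φ2.L = Φ1.L + Φ2.L + 2; omega) _ hjj) rfl

lemma comp_params :
    (comp Φ1 Φ2 d a bb hd1 hd2).params
      = Φ1.params + d * (Φ1.ℓ Φ1.L + 1) + d * (2 * d + 1) + Φ2.params := by
  show ∑ k ∈ Finset.range (Φ1.L + Φ2.L + 2 + 1),
      cℓ Φ1 Φ2 d (k + 1) * (cℓ Φ1 Φ2 d k + 1) = _
  rw [show Φ1.L + Φ2.L + 2 + 1 = Φ1.L + (3 + Φ2.L) from by omega]
  rw [Finset.sum_range_add, Finset.sum_range_add]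
  have hA : ∑ k ∈ Finset.range Φ1.L, cℓ Φ1 Φ2 d (k + 1) * (cℓ Φ1 Φ2 d k + 1)
      = ∑ k ∈ Finset.range Φ1.L, Φ1.ℓ (k + 1) * (Φ1.ℓ k + 1) := by
    refine Finset.sum_congr rfl fun k hk => ?_
    have hk' := Finset.mem_range.mp hk
    rw [cℓ_le (by omega), cℓ_le (by omega)]
  have hB : ∑ k ∈ Finset.range Φ2.L,
        cℓ Φ1 Φ2 d (Φ1.L + (3 + k) + 1) * (cℓ Φ1 Φ2 d (Φ1.L + (3 + k)) + 1)
      = ∑ k ∈ Finset.range Φ2.L, Φ2.ℓ (k + 1 + 1) * (Φ2.ℓ (k + 1) + 1) := by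
    refine Finset.sum_congr rfl fun k _ => ?_
    rw [cℓ_hi hd2 (by omega), cℓ_hi hd2 (by omega),
      show Φ1.L + (3 + k) + 1 - (Φ1.L + 2) = k + 1 + 1 from by omega,
      show Φ1.L + (3 + k) - (Φ1.L + 2) = k + 1 from by omega]
  rw [hA, hB]
  have h3 : ∑ k ∈ Finset.range 3, cℓ Φ1 Φ2 d (Φ1.L + k + 1) * (cℓ Φ1 Φ2 d (Φ1.L + k) + 1)
      = 2 * d * (Φ1.ℓ Φ1.L + 1) + d * (2 * d + 1) + Φ2.ℓ 1 * (d + 1) := by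
    rw [Finset.sum_range_succ, Finset.sum_range_succ, Finset.sum_range_succ,
      Finset.sum_range_zero]
    rw [show Φ1.L + 0 + 1 = Φ1.L + 1 from by omega, show Φ1.L + 0 = Φ1.L from by omega,
      show Φ1.L + 1 + 1 = Φ1.L + 2 from by omega, show Φ1.L + 2 + 1 = Φ1.L + 3 from by omega]
    rw [cℓ_j1, cℓ_j2, cℓ_le le_rfl,
      cℓ_hi hd2 (by omega), show Φ1.L + 3 - (Φ1.L + 2) = 1 from by omega]
    ring
  have h3' : ∑ k ∈ Finset.range 3, cℓ Φ1 Φ2 d (Φ1.L + k + 1) * (cℓ Φ1 Φ2 d (Φ1.L + k) + 1)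
      = ∑ k ∈ Finset.range 3, cℓ Φ1 Φ2 d ((Φ1.L + k) + 1) * (cℓ Φ1 Φ2 d (Φ1.L + k) + 1) := rfl
  have hP1 : Φ1.params = (∑ k ∈ Finset.range Φ1.L, Φ1.ℓ (k + 1) * (Φ1.ℓ k + 1))
      + Φ1.ℓ (Φ1.L + 1) * (Φ1.ℓ Φ1.L + 1) := Finset.sum_range_succ _ _
  have hP2 : Φ2.params = (∑ k ∈ Finset.range Φ2.L, Φ2.ℓ (k + 1 + 1) * (Φ2.ℓ (k + 1) + 1))
      + Φ2.ℓ (0 + 1) * (Φ2.ℓ 0 + 1) := Finset.sum_range_succ' _ _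
  rw [← h3', h3, hP1, hP2, hd1, hd2]
  simp only [Nat.zero_add]
  ring

lemma comp_lastP :
    (comp Φ1 Φ2 d a bb hd1 hd2).ℓ ((comp Φ1 Φ2 d a bb hd1 hd2).L + 1) *
        ((comp Φ1 Φ2 d a bb hd1 hd2).ℓ (comp Φ1 Φ2 d a bb hd1 hd2).L + 1)
      = Φ2.ℓ (Φ2.L + 1) * (Φ2.ℓ Φ2.L + 1) := by
  show cℓ Φ1 Φ2 d (Φ1.L + Φ2.L + 2 + 1) * (cℓ Φ1 Φ2 d (Φ1.L + Φ2.L + 2) + 1) = _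
  rw [cℓ_hi hd2 (by omega), cℓ_hi hd2 (by omega),
    show Φ1.L + Φ2.L + 2 + 1 - (Φ1.L + 2) = Φ2.L + 1 from by omega,
    show Φ1.L + Φ2.L + 2 - (Φ1.L + 2) = Φ2.L from by omega]

end DNN

lemma cost_witness {p : ℝ≥0∞} {m n : ℕ} {D : Set (Fin m → ℝ)}
    {f : (Fin m → ℝ) → (Fin n → ℝ)} {L ε : ℝ} (h : Cost p D f L ε ≠ ⊤) :
    ∃ (Φ : DNN) (g : (Fin m → ℝ) → (Fin n → ℝ)), Φ.Realizes g ∧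
      (∀ x ∈ D, lpNorm p (g x - f x) ≤ ε) ∧
      (∀ x ∈ D, ∀ y ∈ D, lpNorm p (g x - g y) ≤ L * lpNorm p (x - y)) ∧
      ((Φ.params : ℝ≥0∞) ≤ Cost p D f L ε) := by
  set S := { N : ℝ≥0∞ | ∃ Φ : DNN, ∃ g : (Fin m → ℝ) → (Fin n → ℝ),
    Φ.Realizes g ∧ N = (Φ.params : ℝ≥0∞) ∧
    (∀ x ∈ D, lpNorm p (g x - f x) ≤ ε) ∧
    (∀ x ∈ D, ∀ y ∈ D, lpNorm p (g x - g y) ≤ L * lpNorm p (x - y)) } with hS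
  have hCost : Cost p D f L ε = sInf S := rfl
  have hSne : S.Nonempty := by
    by_contra hemp
    rw [Set.not_nonempty_iff_eq_empty] at hemp
    apply h
    rw [hCost, hemp, sInf_empty]
  set T := {k : ℕ | (k : ℝ≥0∞) ∈ S} with hT
  have hTne : T.Nonempty := by
    obtain ⟨N, Φ, g, hr, hN, he, hl⟩ := hSne
    exact ⟨Φ.params, Φ, g, hr, rfl, he, hl⟩
  have hmemT : ((sInf T : ℕ) : ℝ≥0∞) ∈ S := Nat.sInf_mem hTne
  have hlow : ((sInf T : ℕ) : ℝ≥0∞) ≤ Cost p D f L ε := by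
    rw [hCost]
    refine le_sInf fun N hN => ?_
    obtain ⟨Φ, g, hr, hNeq, he, hl⟩ := hN
    rw [hNeq]
    exact_mod_cast Nat.cast_le.mpr (Nat.sInf_le (⟨Φ, g, hr, rfl, he, hl⟩ : Φ.params ∈ T))
  obtain ⟨Φ, g, hr, hNeq, he, hl⟩ := hmemT
  exact ⟨Φ, g, hr, he, hl, by rw [← hNeq]; exact hlow⟩

/-- **Proposition 2.6** (cost of compositions): the approximation cost of
`f_n ∘ ⋯ ∘ f_1` with Lipschitz constant `∏ L_i` is bounded by
`6 ∑_{i=2}^n d_i(d_i+1) + 3 ∑_{i=1}^n Cost_p(f_i, L_i, ε n⁻¹ (∏_{j=i+1}^n L_j)⁻¹)`.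
(Here the paper's `f_1, …, f_n` are `f 0, …, f (n-1)` and `d_1, …, d_{n+1}` are
`dims 0, …, dims n`.) -/
theorem cost_of_composition
    (p : ℝ≥0∞) (hp : 1 ≤ p) (n : ℕ) (hn : 0 < n)
    (dims : ℕ → ℕ) (hdims : ∀ i ≤ n, 0 < dims i)
    (L : ℕ → ℝ) (hL : ∀ i < n, 0 < L i)
    (a b : ℕ → ℝ) (hab : ∀ i < n, a i < b i)
    (f : ∀ i : ℕ, (Fin (dims i) → ℝ) → (Fin (dims (i + 1)) → ℝ))
    (hcont : ∀ i < n, ContinuousOn (f i) (cube (dims i) (a i) (b i)))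
    (hmap : ∀ i, i + 1 < n → ∀ x ∈ cube (dims i) (a i) (b i),
      f i x ∈ cube (dims (i + 1)) (a (i + 1)) (b (i + 1)))
    (ε : ℝ) (hε : 0 ≤ ε) :
    Cost p (cube (dims 0) (a 0) (b 0)) (compSeq dims f n)
        (∏ i ∈ Finset.range n, L i) ε ≤
      6 * ((∑ i ∈ Finset.Ico 1 n, dims i * (dims i + 1) : ℕ) : ℝ≥0∞) +
      3 * ∑ i ∈ Finset.range n,
        Cost p (cube (dims i) (a i) (b i)) (f i) (L i)
          (ε * (n : ℝ)⁻¹ * (∏ j ∈ Finset.Ico (i + 1) n, L j)⁻¹) := by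
  classical
  set εi : ℕ → ℝ := fun i => ε * (n : ℝ)⁻¹ * (∏ j ∈ Finset.Ico (i + 1) n, L j)⁻¹ with hεi
  by_cases htop : ∃ i ∈ Finset.range n,
      Cost p (cube (dims i) (a i) (b i)) (f i) (L i) (εi i) = ⊤
  · obtain ⟨i, hi, hval⟩ := htop
    have hsum : ∑ i ∈ Finset.range n,
        Cost p (cube (dims i) (a i) (b i)) (f i) (L i) (εi i) = ⊤ :=
      ENNReal.sum_eq_top.mpr ⟨i, hi, hval⟩
    rw [hsum, ENNReal.mul_top (by norm_num), add_top]
    exact le_top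
  · push_neg at htop
    have hwit := fun (i : ℕ) (hi : i < n) => cost_witness (htop i (Finset.mem_range.mpr hi))
    choose Φf gf hreal herr hlip hple using hwit
    set P : ℕ → ℕ := fun i => if hi : i < n then (Φf i hi).params else 0 with hPdef
    have hmem : ∀ x, x ∈ cube (dims 0) (a 0) (b 0) → ∀ k, k < n →
        compSeq dims f k x ∈ cube (dims k) (a k) (b k) := by
      intro x hx k
      induction k with
      | zero => intro _; exact hx
      | succ k IH => intro hk; exact hmap k hk _ (IH (by omega))
    have claim : ∀ k, 1 ≤ k → k ≤ n →
        ∃ (G : (Fin (dims 0) → ℝ) → Fin (dims k) → ℝ) (Ψ : DNN),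
          Ψ.Realizes G ∧
          Ψ.params + Ψ.ℓ (Ψ.L + 1) * (Ψ.ℓ Ψ.L + 1) ≤
            (∑ i ∈ Finset.range k, 2 * P i) +
              ∑ i ∈ Finset.Ico 1 k, dims i * (2 * dims i + 1) ∧
          (∀ x ∈ cube (dims 0) (a 0) (b 0),
            lpNorm p (G x - compSeq dims f k x) ≤
              ε * (n : ℝ)⁻¹ * k * (∏ j ∈ Finset.Ico k n, L j)⁻¹) ∧
          (∀ x ∈ cube (dims 0) (a 0) (b 0), ∀ y ∈ cube (dims 0) (a 0) (b 0),
            lpNorm p (G x - G y) ≤ (∏ i ∈ Finset.range k, L i) * lpNorm p (x - y)) := by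
      intro k
      induction k with
      | zero => intro h; exact absurd h (by omega)
      | succ k IH =>
        intro _ hk1
        by_cases hk0 : k = 0
        · subst hk0
          refine ⟨gf 0 hn, Φf 0 hn, hreal 0 hn, ?_, ?_, ?_⟩
          · have h1 := DNN.lastP_le_params (Φf 0 hn)
            have hP0 : P 0 = (Φf 0 hn).params := by rw [hPdef]; exact dif_pos hn
            simp only [show (0 : ℕ) + 1 = 1 from rfl]
            rw [Finset.sum_range_one, Finset.Ico_self, Finset.sum_empty, add_zero, hP0]
            omega
          · intro x hx
            have h2 := herr 0 hn x hx
            have hcast : ε * (n : ℝ)⁻¹ * ((0 : ℕ) + 1 : ℕ) *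
                (∏ j ∈ Finset.Ico (0 + 1) n, L j)⁻¹ = εi 0 := by
              rw [hεi]
              push_cast
              ring
            rw [hcast]
            exact h2
          · intro x hx y hy
            have h3 := hlip 0 hn x hx y hy
            simp only [show (0 : ℕ) + 1 = 1 from rfl, Finset.prod_range_one]
            exact h3
        · have hk1' : 1 ≤ k := by omega
          have hkn : k < n := by omega
          obtain ⟨G, Ψ, hrealΨ, hparΨ, herrΨ, hlipΨ⟩ := IH hk1' (by omega)
          obtain ⟨hm1, hn1, heq1⟩ := hrealΨ
          obtain ⟨hm2, hn2, heq2⟩ := hreal k hkn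
          have habk : a k ≤ b k := le_of_lt (hab k hkn)
          refine ⟨fun x i => gf k hkn (fun j => rclip (a k) (b k) (G x j)) i,
            DNN.comp Ψ (Φf k hkn) (dims k) (a k) (b k) hn1 hm2,
            DNN.comp_realizes hn1 hm2 habk G (gf k hkn) ⟨hm1, hn1, heq1⟩ ⟨hm2, hn2, heq2⟩,
            ?_, ?_, ?_⟩
          · have hcp := DNN.comp_params (Φ1 := Ψ) (Φ2 := Φf k hkn) (a := a k) (bb := b k)
              hn1 hm2
            have hcl := DNN.comp_lastP (Φ1 := Ψ) (Φ2 := Φf k hkn) (a := a k) (bb := b k)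
              hn1 hm2
            have hlp2 := DNN.lastP_le_params (Φf k hkn)
            have hPk : P k = (Φf k hkn).params := by rw [hPdef]; exact dif_pos hkn
            rw [Finset.sum_range_succ, Finset.sum_Ico_succ_top hk1', hcp, hcl, hPk]
            have hdk : dims k * (Ψ.ℓ Ψ.L + 1) = Ψ.ℓ (Ψ.L + 1) * (Ψ.ℓ Ψ.L + 1) := by rw [hn1]
            rw [hdk]
            have key : ∀ (A B C Dp E S1 S2 : ℕ), A + B ≤ S1 + S2 → E ≤ Dp →
                A + B + C + Dp + E ≤ S1 + 2 * Dp + (S2 + C) := by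
              intro A B C Dp E S1 S2 hx1 hx2; omega
            exact key _ _ _ _ _ _ _ hparΨ hlp2
          · intro x hx
            have hvQ := hmem x hx k hkn
            have hcQ : (fun j => rclip (a k) (b k) (G x j)) ∈ cube (dims k) (a k) (b k) :=
              mem_cube.mpr fun j => ⟨rclip_ge habk _, rclip_le _⟩
            show lpNorm p (gf k hkn (fun j => rclip (a k) (b k) (G x j)) -
                compSeq dims f (k + 1) x) ≤ _
            have hLk0 : L k ≠ 0 := ne_of_gt (hL k hkn)
            have hpr0 : (∏ j ∈ Finset.Ico (k + 1) n, L j) ≠ 0 :=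
              ne_of_gt (Finset.prod_pos fun j hj => hL j (Finset.mem_Ico.mp hj).2)
            have hn0 : (n : ℝ) ≠ 0 := Nat.cast_ne_zero.mpr (by omega)
            calc lpNorm p (gf k hkn (fun j => rclip (a k) (b k) (G x j)) -
                  compSeq dims f (k + 1) x)
                ≤ lpNorm p (gf k hkn (fun j => rclip (a k) (b k) (G x j)) -
                      gf k hkn (compSeq dims f k x)) +
                    lpNorm p (gf k hkn (compSeq dims f k x) - compSeq dims f (k + 1) x) :=
                  lpNorm_sub_le p hp _ _ _
              _ ≤ L k * lpNorm p ((fun j => rclip (a k) (b k) (G x j)) - compSeq dims f k x)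
                    + εi k := by
                  refine add_le_add (hlip k hkn _ hcQ _ hvQ) ?_
                  exact herr k hkn _ hvQ
              _ ≤ L k * (ε * (n : ℝ)⁻¹ * k * (∏ j ∈ Finset.Ico k n, L j)⁻¹) + εi k := by
                  refine add_le_add (mul_le_mul_of_nonneg_left ?_ (le_of_lt (hL k hkn))) le_rfl
                  refine le_trans (lpNorm_mono p fun j => ?_) (herrΨ x hx)
                  have hvj := (mem_cube.mp hvQ) j
                  have hlipj := rclip_lip (a k) (b k) (G x j) (compSeq dims f k x j)
                  rw [rclip_of_mem hvj.1 hvj.2] at hlipj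
                  simpa using hlipj
              _ = ε * (n : ℝ)⁻¹ * (k + 1 : ℕ) * (∏ j ∈ Finset.Ico (k + 1) n, L j)⁻¹ := by
                  rw [hεi]
                  rw [Finset.prod_eq_prod_Ico_succ_bot hkn L]
                  push_cast
                  field_simp
          · intro x hx y hy
            have hcQx : (fun j => rclip (a k) (b k) (G x j)) ∈ cube (dims k) (a k) (b k) :=
              mem_cube.mpr fun j => ⟨rclip_ge habk _, rclip_le _⟩
            have hcQy : (fun j => rclip (a k) (b k) (G y j)) ∈ cube (dims k) (a k) (b k) :=
              mem_cube.mpr fun j => ⟨rclip_ge habk _, rclip_le _⟩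
            show lpNorm p (gf k hkn (fun j => rclip (a k) (b k) (G x j)) -
                gf k hkn (fun j => rclip (a k) (b k) (G y j))) ≤ _
            calc lpNorm p (gf k hkn (fun j => rclip (a k) (b k) (G x j)) -
                  gf k hkn (fun j => rclip (a k) (b k) (G y j)))
                ≤ L k * lpNorm p ((fun j => rclip (a k) (b k) (G x j)) -
                    (fun j => rclip (a k) (b k) (G y j))) := hlip k hkn _ hcQx _ hcQy
              _ ≤ L k * lpNorm p (G x - G y) := by
                  refine mul_le_mul_of_nonneg_left (lpNorm_mono p fun j => ?_)
                    (le_of_lt (hL k hkn))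
                  simpa using rclip_lip (a k) (b k) (G x j) (G y j)
              _ ≤ L k * ((∏ i ∈ Finset.range k, L i) * lpNorm p (x - y)) :=
                  mul_le_mul_of_nonneg_left (hlipΨ x hx y hy) (le_of_lt (hL k hkn))
              _ = (∏ i ∈ Finset.range (k + 1), L i) * lpNorm p (x - y) := by
                  rw [Finset.prod_range_succ]
                  ring
    obtain ⟨G, Ψ, hrealn, hparn, herrn, hlipn⟩ := claim n hn le_rfl
    have herrε : ∀ x ∈ cube (dims 0) (a 0) (b 0),
        lpNorm p (G x - compSeq dims f n x) ≤ ε := by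
      intro x hx
      have h := herrn x hx
      have hn0 : (n : ℝ) ≠ 0 := Nat.cast_ne_zero.mpr (by omega)
      have heq : ε * (n : ℝ)⁻¹ * n * (∏ j ∈ Finset.Ico n n, L j)⁻¹ = ε := by
        rw [Finset.Ico_self, Finset.prod_empty, inv_one, mul_one]
        field_simp
      rwa [heq] at h
    have hc1 : Cost p (cube (dims 0) (a 0) (b 0)) (compSeq dims f n)
        (∏ i ∈ Finset.range n, L i) ε ≤ (Ψ.params : ℝ≥0∞) := by
      unfold Cost
      exact sInf_le ⟨Ψ, G, hrealn, rfl, herrε, hlipn⟩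
    refine hc1.trans ?_
    have hnat : Ψ.params ≤ 6 * (∑ i ∈ Finset.Ico 1 n, dims i * (dims i + 1)) +
        3 * ∑ i ∈ Finset.range n, P i := by
      have h2 : ∑ i ∈ Finset.Ico 1 n, dims i * (2 * dims i + 1) ≤
          6 * ∑ i ∈ Finset.Ico 1 n, dims i * (dims i + 1) := by
        rw [Finset.mul_sum]
        refine Finset.sum_le_sum fun i _ => ?_
        calc dims i * (2 * dims i + 1) ≤ dims i * (6 * (dims i + 1)) :=
              Nat.mul_le_mul_left _ (by omega)
          _ = 6 * (dims i * (dims i + 1)) := by ring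
      have h3 : ∑ i ∈ Finset.range n, 2 * P i ≤ 3 * ∑ i ∈ Finset.range n, P i := by
        rw [Finset.mul_sum]
        exact Finset.sum_le_sum fun i _ => by omega
      calc Ψ.params ≤ Ψ.params + Ψ.ℓ (Ψ.L + 1) * (Ψ.ℓ Ψ.L + 1) := Nat.le_add_right _ _
        _ ≤ (∑ i ∈ Finset.range n, 2 * P i) +
            ∑ i ∈ Finset.Ico 1 n, dims i * (2 * dims i + 1) := hparn
        _ ≤ 3 * (∑ i ∈ Finset.range n, P i) +
            6 * ∑ i ∈ Finset.Ico 1 n, dims i * (dims i + 1) := Nat.add_le_add h3 h2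
        _ = 6 * (∑ i ∈ Finset.Ico 1 n, dims i * (dims i + 1)) +
            3 * ∑ i ∈ Finset.range n, P i := by ring
    calc (Ψ.params : ℝ≥0∞)
        ≤ ((6 * (∑ i ∈ Finset.Ico 1 n, dims i * (dims i + 1)) +
            3 * ∑ i ∈ Finset.range n, P i : ℕ) : ℝ≥0∞) := Nat.cast_le.mpr hnat
      _ = 6 * ((∑ i ∈ Finset.Ico 1 n, dims i * (dims i + 1) : ℕ) : ℝ≥0∞) +
          3 * ∑ i ∈ Finset.range n, ((P i : ℕ) : ℝ≥0∞) := by push_cast; ring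
      _ ≤ 6 * ((∑ i ∈ Finset.Ico 1 n, dims i * (dims i + 1) : ℕ) : ℝ≥0∞) +
          3 * ∑ i ∈ Finset.range n,
            Cost p (cube (dims i) (a i) (b i)) (f i) (L i) (εi i) := by
        refine add_le_add_right (mul_le_mul_right (Finset.sum_le_sum fun i hi => ?_) 3) _
        have hi' := Finset.mem_range.mp hi
        have hPi : P i = (Φf i hi').params := by rw [hPdef]; exact dif_pos hi'
        rw [hPi]
        exact hple i hi'


end
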